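/- arXiv:1112.5874 — 2 statements merged into one kernel-verified Lean document; each statement's English description precedes it below -/
import Mathlib

section
/- Let F_2 be the free group on generators α, β. Every element of F_2 can be written uniquely in the normal form α^{ε_1}β^{δ_1}⋯α^{ε_n}β^{δ_n} with ε_i, δ_i ∈ {-1,0,1} (and no cancellation), and define d(α^{ε_1}β^{δ_1}⋯α^{ε_n}β^{δ_n}) = Σ_{i=1}^n δ_i Σ_{j=1}^i ε_j. Then for all u, v ∈ F_2, d(uv) = d(u) + d(v) + e_α(u)·e_β(v), where e_α(w) and e_β(w) denote the exponent sums of α and β in w respectively. -/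
/-- sign of a `Bool` exponent: `true ↦ 1`, `false ↦ -1`. -/
def sgn (b : Bool) : ℤ := if b then 1 else -1

/-- Auxiliary computation of Morita's function `d` on a (reduced) word in the
free group on two generators (`false` = α, `true` = β), keeping a running
sum `acc` of the α-exponents read so far.  Each letter `β^{δ}` contributes
`δ * acc`. -/
def dWord : List (Bool × Bool) → ℤ → ℤ
  | [], _ => 0
  | (g, s) :: rest, acc =>
      if g then sgn s * acc + dWord rest acc
      else dWord rest (acc + sgn s)

/-- Morita's function `d : F₂ → ℤ`, defined on the normal form
`α^{ε_1}β^{δ_1}⋯α^{ε_n}β^{δ_n}` by `d = Σ_i δ_i (ε_1 + ⋯ + ε_i)`,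
computed here from the reduced word. -/
def moritaD (w : FreeGroup Bool) : ℤ := dWord w.toWord 0

/-- Exponent sum of the generator `g` in the word `w`. -/
def expSum (g : Bool) (w : FreeGroup Bool) : ℤ :=
  (w.toWord.map fun p => if p.1 = g then sgn p.2 else 0).sum

/-- The generator α of F₂. -/
def genα : FreeGroup Bool := FreeGroup.of false

/-- The generator β of F₂. -/
def genβ : FreeGroup Bool := FreeGroup.of true

/-- The integral Heisenberg group. -/
structure Heis where
  a : ℤ
  b : ℤ
  c : ℤ

namespace Heis

@[ext] theorem ext' {x y : Heis} (ha : x.a = y.a) (hb : x.b = y.b) (hc : x.c = y.c) :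
    x = y := by cases x; cases y; simp_all

instance : Mul Heis := ⟨fun x y => ⟨x.a + y.a, x.b + y.b, x.c + y.c + x.a * y.b⟩⟩
instance : One Heis := ⟨⟨0, 0, 0⟩⟩
instance : Inv Heis := ⟨fun x => ⟨-x.a, -x.b, -x.c + x.a * x.b⟩⟩

@[simp] theorem mul_a (x y : Heis) : (x * y).a = x.a + y.a := rfl
@[simp] theorem mul_b (x y : Heis) : (x * y).b = x.b + y.b := rfl
@[simp] theorem mul_c (x y : Heis) : (x * y).c = x.c + y.c + x.a * y.b := rfl
@[simp] theorem one_a : (1 : Heis).a = 0 := rfl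
@[simp] theorem one_b : (1 : Heis).b = 0 := rfl
@[simp] theorem one_c : (1 : Heis).c = 0 := rfl
@[simp] theorem inv_a (x : Heis) : x⁻¹.a = -x.a := rfl
@[simp] theorem inv_b (x : Heis) : x⁻¹.b = -x.b := rfl
@[simp] theorem inv_c (x : Heis) : x⁻¹.c = -x.c + x.a * x.b := rfl

instance : Group Heis where
  mul_assoc x y z := by apply ext' <;> simp <;> ring
  one_mul x := by apply ext' <;> simp
  mul_one x := by apply ext' <;> simp
  inv_mul_cancel x := by apply ext' <;> simp <;> ring

end Heis

/-- the image of a generator -/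
def hgen (g : Bool) : Heis := if g then ⟨0, 1, 0⟩ else ⟨1, 0, 0⟩

def heisHom : FreeGroup Bool →* Heis := FreeGroup.lift hgen

/-- exponent-sum on lists -/
def eSum (g : Bool) (L : List (Bool × Bool)) : ℤ :=
  (L.map fun p => if p.1 = g then sgn p.2 else 0).sum

theorem dWord_acc (L : List (Bool × Bool)) (acc : ℤ) :
    dWord L acc = dWord L 0 + acc * eSum true L := by
  induction L generalizing acc with
  | nil => simp [dWord, eSum]
  | cons p rest ih =>
    obtain ⟨g, s⟩ := p
    cases g with
    | false =>
      simp only [dWord, eSum, List.map_cons, List.sum_cons]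
      norm_num
      rw [ih (acc + sgn s), ih (sgn s)]
      simp only [eSum]
      norm_num
      ring
    | true =>
      simp only [dWord, if_pos rfl, eSum, List.map_cons, List.sum_cons]
      rw [ih acc]
      simp only [eSum]
      norm_num
      ring

theorem prod_eq (L : List (Bool × Bool)) :
    (L.map (fun x => bif x.2 then hgen x.1 else (hgen x.1)⁻¹)).prod
      = ⟨eSum false L, eSum true L, dWord L 0⟩ := by
  induction L with
  | nil => simp [eSum, dWord]; rfl
  | cons p rest ih =>
    obtain ⟨g, s⟩ := p
    rw [List.map_cons, List.prod_cons, ih]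
    have hg : (bif s then hgen g else (hgen g)⁻¹)
        = ⟨if g then 0 else sgn s, if g then sgn s else 0, 0⟩ := by
      cases g <;> cases s <;> simp [hgen, sgn] <;> rfl
    rw [hg]
    cases g with
    | false =>
      apply Heis.ext' <;>
        simp [eSum, dWord, dWord_acc rest (0 + sgn s), dWord_acc rest (sgn s)] <;> ring
    | true =>
      apply Heis.ext' <;> simp [eSum, dWord] <;> ring

theorem heisHom_eq (w : FreeGroup Bool) :
    heisHom w = ⟨expSum false w, expSum true w, moritaD w⟩ := by
  conv_lhs => rw [← FreeGroup.mk_toWord (x := w)]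
  rw [heisHom, FreeGroup.lift_mk, prod_eq]
  rfl

/-- For all `u, v ∈ F₂`, `d(uv) = d(u) + d(v) + e_α(u)·e_β(v)`. -/
theorem morita_d_mul (u v : FreeGroup Bool) :
    moritaD (u * v) = moritaD u + moritaD v + expSum false u * expSum true v := by
  have h := heisHom.map_mul u v
  rw [heisHom_eq, heisHom_eq, heisHom_eq] at h
  have := congrArg Heis.c h
  simpa using this
end

section
/- With d: F_2 → ℤ as defined via normal forms (d(α^{ε_1}β^{δ_1}⋯α^{ε_n}β^{δ_n}) = Σ_i δ_i Σ_{j≤i} ε_j), for every w ∈ F_2 we have d(w^{-1}) = e_α(w)·e_β(w) − d(w). -/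
def eSumL (g : Bool) (L : List (Bool × Bool)) : ℤ :=
  (L.map fun p => if p.1 = g then sgn p.2 else 0).sum

lemma sgn_not (s : Bool) : sgn (!s) = - sgn s := by cases s <;> simp [sgn]

lemma dWord_consA (s : Bool) (L : List (Bool × Bool)) (acc : ℤ) :
    dWord ((false, s) :: L) acc = dWord L (acc + sgn s) := rfl

lemma dWord_consB (s : Bool) (L : List (Bool × Bool)) (acc : ℤ) :
    dWord ((true, s) :: L) acc = sgn s * acc + dWord L acc := rfl

lemma eSumL_consA (g s : Bool) (L : List (Bool × Bool)) :
    eSumL g ((false, s) :: L) = (if g = false then sgn s else 0) + eSumL g L := by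
  cases g <;> simp [eSumL]

lemma eSumL_consB (g s : Bool) (L : List (Bool × Bool)) :
    eSumL g ((true, s) :: L) = (if g = true then sgn s else 0) + eSumL g L := by
  cases g <;> simp [eSumL]

lemma dWord_shift (L : List (Bool × Bool)) : ∀ acc : ℤ,
    dWord L acc = dWord L 0 + acc * eSumL true L := by
  induction L with
  | nil => intro acc; simp [dWord, eSumL]
  | cons p L ih =>
    intro acc
    obtain ⟨g, s⟩ := p
    cases g
    · rw [dWord_consA, dWord_consA, eSumL_consA, ih (acc + sgn s), ih (0 + sgn s)]
      simp; ring
    · rw [dWord_consB, dWord_consB, eSumL_consB, ih acc]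
      simp; ring

lemma dWord_append (L1 L2 : List (Bool × Bool)) : ∀ acc : ℤ,
    dWord (L1 ++ L2) acc = dWord L1 acc + dWord L2 (acc + eSumL false L1) := by
  induction L1 with
  | nil => intro acc; simp [dWord, eSumL]
  | cons p L ih =>
    intro acc
    obtain ⟨g, s⟩ := p
    cases g
    · rw [List.cons_append, dWord_consA, dWord_consA, eSumL_consA, ih]
      simp; ring_nf
    · rw [List.cons_append, dWord_consB, dWord_consB, eSumL_consB, ih]
      simp; ring_nf

lemma invRev_cons (p : Bool × Bool) (L : List (Bool × Bool)) :
    FreeGroup.invRev (p :: L) = FreeGroup.invRev L ++ [(p.1, !p.2)] := by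
  simp [FreeGroup.invRev]

lemma eSumL_invRev (g : Bool) (L : List (Bool × Bool)) :
    eSumL g (FreeGroup.invRev L) = - eSumL g L := by
  induction L with
  | nil => simp [FreeGroup.invRev, eSumL]
  | cons p L ih =>
    obtain ⟨h, s⟩ := p
    simp only [invRev_cons, eSumL, List.map_append, List.sum_append,
      List.map_cons, List.map_nil, List.sum_cons, List.sum_nil] at *
    rw [ih, sgn_not]
    by_cases hg : h = g <;> simp [hg]

lemma key (L : List (Bool × Bool)) :
    dWord (FreeGroup.invRev L) 0 = eSumL false L * eSumL true L - dWord L 0 := by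
  induction L with
  | nil => simp [FreeGroup.invRev, dWord, eSumL]
  | cons p L ih =>
    obtain ⟨g, s⟩ := p
    rw [invRev_cons, dWord_append, ih]
    cases g
    · rw [dWord_consA, dWord_consA, eSumL_consA, eSumL_consA,
        dWord_shift L (0 + sgn s)]
      simp [dWord, eSumL_invRev, sgn_not]; ring
    · rw [dWord_consB, dWord_consB, eSumL_consB, eSumL_consB]
      simp [dWord, eSumL_invRev, sgn_not]; ring

/-- For every `w ∈ F₂`, `d(w⁻¹) = e_α(w)·e_β(w) − d(w)`. -/
theorem morita_d_inv (w : FreeGroup Bool) :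
    moritaD w⁻¹ = expSum false w * expSum true w - moritaD w := by
  rw [moritaD, moritaD, FreeGroup.toWord_inv]
  have h1 : expSum false w = eSumL false w.toWord := rfl
  have h2 : expSum true w = eSumL true w.toWord := rfl
  rw [h1, h2, key]
end
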